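/- Let O be a reduced operad in pointed topological spaces and let T be a tree appearing in the bar construction B(O)(I ∪_a J) for a ∈ I. Then T admits at most one decomposition as a grafting of an I-labeled tree and a J-labeled tree along the leaf a; consequently the cooperadic partial decomposition B(O)(I ∪_a J) → B(O)(I) ∧ B(O)(J), sending T to its unique decomposition if one exists and to the basepoint otherwise, is well-defined. -/

import Mathlib

/-- Rooted trees with leaves labeled by `α` (internal vertices carry an ordered list of
subtrees; the root's unary edge is implicit). -/
inductive LTree (α : Type) : Type
  | leaf : α → LTree α
  | node : List (LTree α) → LTree α

namespace LTree

/-- The list of leaf labels of a tree. -/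
def leaves {α : Type} : LTree α → List α
  | leaf a => [a]
  | node ts => ts.attach.flatMap (fun t => leaves t.1)
termination_by t => sizeOf t
decreasing_by
  simp_wf
  have := List.sizeOf_lt_of_mem t.2
  omega


/-- Grafting `T₂` onto a tree along the leaf labeled `a`: replace each leaf labeled `a`
by `T₂`. -/
def graft {α : Type} [DecidableEq α] (a : α) (T₂ : LTree α) : LTree α → LTree α
  | leaf b => if b = a then T₂ else leaf b
  | node ts => node (ts.attach.map (fun t => graft a T₂ t.1))
termination_by t => sizeOf t
decreasing_by
  simp_wf
  have := List.sizeOf_lt_of_mem t.2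
  omega


/-- A tree is reduced if every internal vertex has at least two children (as in the bar
construction, where only the implicit root edge may be unary). -/
def Reduced {α : Type} : LTree α → Prop
  | leaf _ => True
  | node ts => 2 ≤ ts.length ∧ ∀ t ∈ ts.attach, Reduced t.1
termination_by t => sizeOf t
decreasing_by
  simp_wf
  have := List.sizeOf_lt_of_mem t.2
  omega


end LTree

open LTree

namespace LTree
set_option linter.unusedSectionVars false
variable {α : Type} [DecidableEq α]

theorem leaves_leaf (a : α) : leaves (leaf a) = [a] := by simp [leaves]

theorem leaves_node (ts : List (LTree α)) : leaves (node ts) = ts.flatMap leaves := by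
  rw [leaves]
  simp [List.attach_map_val]

theorem graft_leaf (a b : α) (T₂ : LTree α) :
    graft a T₂ (leaf b) = if b = a then T₂ else leaf b := by simp [graft]

theorem graft_node (a : α) (T₂ : LTree α) (ts : List (LTree α)) :
    graft a T₂ (node ts) = node (ts.map (graft a T₂)) := by
  rw [graft]
  simp [List.attach_map_val]

theorem reduced_node (ts : List (LTree α)) :
    Reduced (node ts) ↔ 2 ≤ ts.length ∧ ∀ t ∈ ts, Reduced t := by
  rw [Reduced]
  simp

end LTree

namespace LTree
set_option linter.unusedSectionVars false
variable {α : Type} [DecidableEq α]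

theorem sizeOf_lt_of_mem {ts : List (LTree α)} {t : LTree α} (h : t ∈ ts) :
    sizeOf t < sizeOf (node ts) := by
  have := List.sizeOf_lt_of_mem h
  simp only [node.sizeOf_spec]
  omega

theorem leaves_graft (a : α) (T₂ : LTree α) (t : LTree α) :
    leaves (graft a T₂ t) = (leaves t).flatMap (fun b => if b = a then leaves T₂ else [b]) := by
  induction t using LTree.rec (motive_2 := fun ts => ∀ t ∈ ts,
      leaves (graft a T₂ t) = (leaves t).flatMap (fun b => if b = a then leaves T₂ else [b])) with
  | leaf b => rw [graft_leaf]; split <;> simp_all [leaves_leaf]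
  | node ts ih =>
      rw [graft_node, leaves_node, leaves_node, List.flatMap_map, List.flatMap_assoc]
      exact List.flatMap_congr (fun t ht => ih t ht)
  | nil => rename_i t ht; simp at ht
  | cons head tail h1 h2 =>
      rename_i t ht
      rcases List.mem_cons.mp ht with h | h
      · exact h ▸ h1
      · exact h2 t h

theorem mem_leaves_graft {a x : α} {T₂ t : LTree α} :
    x ∈ leaves (graft a T₂ t) ↔ (x ∈ leaves t ∧ x ≠ a) ∨ (a ∈ leaves t ∧ x ∈ leaves T₂) := by
  rw [leaves_graft, List.mem_flatMap]
  constructor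
  · rintro ⟨b, hb, hx⟩
    split at hx
    · next h => exact Or.inr ⟨h ▸ hb, hx⟩
    · next h => simp at hx; subst hx; exact Or.inl ⟨hb, h⟩
  · rintro (⟨hx, hxa⟩ | ⟨hat, hx⟩)
    · exact ⟨x, hx, by simp [hxa]⟩
    · exact ⟨a, hat, by simp [hx]⟩

theorem graft_of_not_mem (a : α) (T₂ : LTree α) :
    ∀ t : LTree α, a ∉ leaves t → graft a T₂ t = t := by
  intro t
  induction t using LTree.rec (motive_2 := fun ts => ∀ t ∈ ts, a ∉ leaves t → graft a T₂ t = t) with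
  | leaf b =>
      intro h
      rw [graft_leaf, if_neg]
      intro hb; subst hb; simp [leaves_leaf] at h
  | node ts ih =>
      intro h
      have hall : ∀ t ∈ ts, graft a T₂ t = t := by
        intro t ht
        exact ih t ht (fun hat => h (by rw [leaves_node]; exact List.mem_flatMap.mpr ⟨t, ht, hat⟩))
      rw [graft_node]
      congr 1
      calc ts.map (graft a T₂) = ts.map id := List.map_congr_left hall
        _ = ts := List.map_id ts
  | nil => rename_i t htmem h; exact absurd htmem (by simp)
  | cons head tail h1 h2 =>
      rename_i t htmem h
      rcases List.mem_cons.mp htmem with hh | hh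
      · subst hh; exact h1 h
      · exact h2 t hh h

theorem leaves_ne_nil : ∀ t : LTree α, Reduced t → leaves t ≠ [] := by
  intro t
  induction t using LTree.rec (motive_2 := fun ts => ∀ t ∈ ts, Reduced t → leaves t ≠ []) with
  | leaf b => intro _; simp [leaves_leaf]
  | node ts ih =>
      intro hr
      rw [reduced_node] at hr
      obtain ⟨hlen, hred⟩ := hr
      rw [leaves_node]
      have hne : ts ≠ [] := by intro h; subst h; simp at hlen
      obtain ⟨t, ht⟩ := List.exists_mem_of_ne_nil ts hne
      intro hnil
      exact ih t ht (hred t ht) (List.flatMap_eq_nil_iff.mp hnil t ht)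
  | nil => rename_i t htmem h; exact absurd htmem (by simp)
  | cons head tail h1 h2 =>
      rename_i t htmem h
      rcases List.mem_cons.mp htmem with hh | hh
      · subst hh; exact h1 h
      · exact h2 t hh h

theorem two_le_leaves_length_of_node {ts : List (LTree α)} (hr : Reduced (node ts)) :
    2 ≤ (leaves (node ts)).length := by
  rw [reduced_node] at hr
  obtain ⟨hlen, hred⟩ := hr
  rcases ts with _ | ⟨t1, _ | ⟨t2, rest⟩⟩
  · simp at hlen
  · simp at hlen
  · rw [leaves_node]
    simp only [List.flatMap_cons, List.length_append]
    have h1 := List.length_pos_iff.mpr (leaves_ne_nil t1 (hred t1 (by simp)))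
    have h2 := List.length_pos_iff.mpr (leaves_ne_nil t2 (hred t2 (by simp)))
    omega

theorem length_le_one_of_forall_eq {a : α} : ∀ {l : List α}, l.Nodup → (∀ x ∈ l, x = a) →
    l.length ≤ 1
  | [], _, _ => by simp
  | [x], _, _ => by simp
  | x :: y :: l, hn, h => by
      have hx := h x (by simp)
      have hy := h y (by simp)
      subst hx; rw [hy] at hn; simp at hn

theorem sublist_flatMap_of_mem {β γ : Type} {f : β → List γ} {l : List β} {x : β}
    (h : x ∈ l) : List.Sublist (f x) (l.flatMap f) := by
  induction l with
  | nil => simp at h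
  | cons y l ih =>
      rw [List.flatMap_cons]
      rcases List.mem_cons.mp h with rfl | h
      · exact List.sublist_append_left _ _
      · exact (ih h).trans (List.sublist_append_right _ _)

theorem main_aux (a : α) : ∀ n (T₁ T₁' T₂ T₂' : LTree α), sizeOf T₁ ≤ n →
    Reduced T₂ → Reduced T₂' →
    (leaves T₁).Nodup → (leaves T₁').Nodup →
    a ∈ leaves T₁ → a ∈ leaves T₁' →
    (∀ b ∈ leaves T₂, b ∉ leaves T₁) → (∀ b ∈ leaves T₂', b ∉ leaves T₁') →
    (∀ b, b ∈ leaves T₁ ↔ b ∈ leaves T₁') → (∀ b, b ∈ leaves T₂ ↔ b ∈ leaves T₂') →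
    Reduced T₁ → Reduced T₁' →
    graft a T₂ T₁ = graft a T₂' T₁' → T₁ = T₁' ∧ T₂ = T₂' := by
  intro n
  induction n with
  | zero =>
      intro T₁ T₁' T₂ T₂' hsz
      exfalso
      cases T₁ <;> simp at hsz <;> omega
  | succ n ih =>
    intro T₁ T₁' T₂ T₂' hsz hr₂ hr₂' hn₁ hn₁' ha ha' hd hd' hI hJ hr₁ hr₁' hgraft
    cases T₁ with
    | leaf b =>
      have hb : a = b := by simpa [leaves_leaf] using ha
      subst hb
      cases T₁' with
      | leaf b' =>
        have hb' : a = b' := by simpa [leaves_leaf] using ha'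
        subst hb'
        refine ⟨rfl, ?_⟩
        simpa [graft_leaf] using hgraft
      | node ts' =>
        exfalso
        have h2 := two_le_leaves_length_of_node hr₁'
        have hall : ∀ x ∈ leaves (node ts'), x = a := by
          intro x hx
          simpa [leaves_leaf] using (hI x).mpr hx
        have := length_le_one_of_forall_eq hn₁' hall
        omega
    | node ts =>
      cases T₁' with
      | leaf b' =>
        exfalso
        have h2 := two_le_leaves_length_of_node hr₁
        have hall : ∀ x ∈ leaves (node ts), x = a := by
          intro x hx
          have hb' : a = b' := by simpa [leaves_leaf] using ha'
          subst hb'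
          simpa [leaves_leaf] using (hI x).mp hx
        have := length_le_one_of_forall_eq hn₁ hall
        omega
      | node ts' =>
        rw [graft_node, graft_node] at hgraft
        have hmap : ts.map (graft a T₂) = ts'.map (graft a T₂') := by
          injection hgraft
        have hlen : ts.length = ts'.length := by
          simpa using congrArg List.length hmap
        have hpt : ∀ i (h : i < ts.length) (h' : i < ts'.length),
            graft a T₂ ts[i] = graft a T₂' ts'[i] := by
          intro i h h'
          have h1 : (ts.map (graft a T₂))[i]'(by simpa using h)
              = (ts'.map (graft a T₂'))[i]'(by simpa using h') :=
            List.getElem_of_eq hmap _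
          simpa using h1
        -- membership helpers
        have hsub : ∀ i (h : i < ts.length), ∀ x ∈ leaves ts[i], x ∈ leaves (node ts) := by
          intro i h x hx
          rw [leaves_node]
          exact List.mem_flatMap.mpr ⟨ts[i], List.getElem_mem h, hx⟩
        have hsub' : ∀ i (h : i < ts'.length), ∀ x ∈ leaves ts'[i], x ∈ leaves (node ts') := by
          intro i h x hx
          rw [leaves_node]
          exact List.mem_flatMap.mpr ⟨ts'[i], List.getElem_mem h, hx⟩
        -- a ∈ child i of ts iff a ∈ child i of ts'
        have hmema : ∀ i (h : i < ts.length) (h' : i < ts'.length),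
            (a ∈ leaves ts[i] ↔ a ∈ leaves ts'[i]) := by
          intro i h h'
          constructor
          · intro hai
            obtain ⟨b, hb⟩ := List.exists_mem_of_ne_nil _ (leaves_ne_nil T₂ hr₂)
            have hbg : b ∈ leaves (graft a T₂ ts[i]) :=
              mem_leaves_graft.mpr (Or.inr ⟨hai, hb⟩)
            rw [hpt i h h'] at hbg
            rcases mem_leaves_graft.mp hbg with ⟨hb1, _⟩ | ⟨h1, _⟩
            · exact absurd (hsub' i h' b hb1) (hd' b ((hJ b).mp hb))
            · exact h1
          · intro hai
            obtain ⟨b, hb⟩ := List.exists_mem_of_ne_nil _ (leaves_ne_nil T₂' hr₂')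
            have hbg : b ∈ leaves (graft a T₂' ts'[i]) :=
              mem_leaves_graft.mpr (Or.inr ⟨hai, hb⟩)
            rw [← hpt i h h'] at hbg
            rcases mem_leaves_graft.mp hbg with ⟨hb1, _⟩ | ⟨h1, _⟩
            · exact absurd (hsub i h b hb1) (hd b ((hJ b).mpr hb))
            · exact h1
        -- leaf-set equality of corresponding children
        have hIc : ∀ i (h : i < ts.length) (h' : i < ts'.length),
            ∀ x, x ∈ leaves ts[i] ↔ x ∈ leaves ts'[i] := by
          intro i h h' x
          constructor
          · intro hx
            by_cases hxa : x = a
            · subst hxa; exact (hmema i h h').mp hx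
            · have hxg : x ∈ leaves (graft a T₂ ts[i]) :=
                mem_leaves_graft.mpr (Or.inl ⟨hx, hxa⟩)
              rw [hpt i h h'] at hxg
              rcases mem_leaves_graft.mp hxg with ⟨h1, _⟩ | ⟨_, h2⟩
              · exact h1
              · exact absurd ((hI x).mp (hsub i h x hx))
                  (hd' x ((hJ x).mp ((hJ x).mpr h2)))
          · intro hx
            by_cases hxa : x = a
            · subst hxa; exact (hmema i h h').mpr hx
            · have hxg : x ∈ leaves (graft a T₂' ts'[i]) :=
                mem_leaves_graft.mpr (Or.inl ⟨hx, hxa⟩)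
              rw [← hpt i h h'] at hxg
              rcases mem_leaves_graft.mp hxg with ⟨h1, _⟩ | ⟨_, h2⟩
              · exact h1
              · exact absurd ((hI x).mpr (hsub' i h' x hx)) (hd x h2)
        -- the inductive step for children containing a
        have hred := (reduced_node ts).mp hr₁
        have hred' := (reduced_node ts').mp hr₁'
        have hchild : ∀ i (h : i < ts.length) (h' : i < ts'.length), a ∈ leaves ts[i] →
            ts[i] = ts'[i] ∧ T₂ = T₂' := by
          intro i h h' hai
          have hszi : sizeOf ts[i] ≤ n := by
            have := sizeOf_lt_of_mem (List.getElem_mem h)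
            omega
          refine ih ts[i] ts'[i] T₂ T₂' hszi hr₂ hr₂' ?_ ?_ hai ((hmema i h h').mp hai)
            ?_ ?_ (hIc i h h') hJ (hred.2 _ (List.getElem_mem h))
            (hred'.2 _ (List.getElem_mem h')) (hpt i h h')
          · rw [leaves_node] at hn₁
            exact (sublist_flatMap_of_mem (List.getElem_mem h)).nodup hn₁
          · rw [leaves_node] at hn₁'
            exact (sublist_flatMap_of_mem (List.getElem_mem h')).nodup hn₁'
          · exact fun b hb => fun hmem => hd b hb (hsub i h b hmem)
          · exact fun b hb => fun hmem => hd' b hb (hsub' i h' b hmem)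
        -- a occurs in some child
        obtain ⟨t0, ht0, hat0⟩ := List.mem_flatMap.mp (by rw [leaves_node] at ha; exact ha)
        obtain ⟨i0, hi0, hti0⟩ := List.mem_iff_getElem.mp ht0
        have hT2 : T₂ = T₂' := (hchild i0 hi0 (hlen ▸ hi0) (hti0 ▸ hat0)).2
        refine ⟨?_, hT2⟩
        congr 1
        apply List.ext_getElem hlen
        intro i h h'
        by_cases hai : a ∈ leaves ts[i]
        · exact (hchild i h h' hai).1
        · have hai' : a ∉ leaves ts'[i] := fun hh => hai ((hmema i h h').mpr hh)
          have := hpt i h h'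
          rwa [graft_of_not_mem a T₂ _ hai, graft_of_not_mem a T₂' _ hai'] at this

end LTree


/-- a tree appearing in the bar construction admits at most one
decomposition as a grafting of an `I`-labeled tree and a `J`-labeled tree along the
leaf `a`: if `(T₁, T₂)` and `(T₁', T₂')` are pairs of reduced, injectively-labeled
trees with `a` among the leaves of `T₁` and `T₁'`, with the leaf labels of `T₂`
(resp. `T₂'`) disjoint from those of `T₁` (resp. `T₁'`), with `T₁, T₁'` having the same
leaf-label set `I` and `T₂, T₂'` the same leaf-label set `J`, and if both pairs graft to
the same tree, then `T₁ = T₁'` and `T₂ = T₂'`.  (This uniqueness is what makes the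
cooperadic partial decomposition of the bar construction well-defined.) -/
theorem stmt_14 {α : Type} [DecidableEq α] (a : α) (T₁ T₁' T₂ T₂' : LTree α)
    (hr₁ : Reduced T₁) (hr₁' : Reduced T₁') (hr₂ : Reduced T₂) (hr₂' : Reduced T₂')
    (hn₁ : (leaves T₁).Nodup) (hn₁' : (leaves T₁').Nodup)
    (hn₂ : (leaves T₂).Nodup) (hn₂' : (leaves T₂').Nodup)
    (ha : a ∈ leaves T₁) (ha' : a ∈ leaves T₁')
    (hd : ∀ b ∈ leaves T₂, b ∉ leaves T₁) (hd' : ∀ b ∈ leaves T₂', b ∉ leaves T₁')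
    (hI : {b | b ∈ leaves T₁} = {b | b ∈ leaves T₁'})
    (hJ : {b | b ∈ leaves T₂} = {b | b ∈ leaves T₂'})
    (hgraft : graft a T₂ T₁ = graft a T₂' T₁') :
    T₁ = T₁' ∧ T₂ = T₂' := by
  refine main_aux a (sizeOf T₁) T₁ T₁' T₂ T₂' le_rfl hr₂ hr₂' hn₁ hn₁' ha ha' hd hd'
    ?_ ?_ hr₁ hr₁' hgraft
  · intro b
    have := Set.ext_iff.mp hI b
    simpa using this
  · intro b
    have := Set.ext_iff.mp hJ b
    simpa using this
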